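/- Let τ : ℤ³ → ℂ be nowhere zero and satisfy both bilinear equations p*τ̂ₜ*τ̄ - q*τₜ*τ̂ᵦ + τ*τ̂ₜᵦ = 0 and q*τ̂ₜ*τ̄ - p*τₜ*τ̂ᵦ - τ̂*τₜᵦ = 0 at a point. Define ω = τ̂/τ (so ω̄ = τ̂ᵦ/τ̄, ω̃ = τ̂ₜ/τₜ, ωᵦₜ = τ̂ₜᵦ/τₜᵦ). Then ωᵦₜ/ω = (q*ω̄ - p*ω̃)/(q*ω̃ - p*ω̄), i.e., ω satisfies the lattice modified KdV equation. -/

import Mathlib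

/-- Lemma C.1, equation (C.3a): if `τ` satisfies the bilinear equations (3.4),
then `ω = τ̂/τ` satisfies the lattice modified KdV equation. -/
theorem tau_function_mKdV
    (τ : ℤ → ℤ → ℤ → ℂ) (l m n : ℤ) (p q : ℂ)
    (hτ : ∀ i j k : ℤ, τ i j k ≠ 0)
    (hbil1 : p * τ l (m + 1) (n + 1) * τ (l + 1) m n -
        q * τ l (m + 1) n * τ (l + 1) m (n + 1) +
        τ l m n * τ (l + 1) (m + 1) (n + 1) = 0)
    (hbil2 : q * τ l (m + 1) (n + 1) * τ (l + 1) m n -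
        p * τ l (m + 1) n * τ (l + 1) m (n + 1) -
        τ l m (n + 1) * τ (l + 1) (m + 1) n = 0)
    (hden : q * (τ l (m + 1) (n + 1) / τ l (m + 1) n) -
        p * (τ (l + 1) m (n + 1) / τ (l + 1) m n) ≠ 0) :
    (τ (l + 1) (m + 1) (n + 1) / τ (l + 1) (m + 1) n) / (τ l m (n + 1) / τ l m n) =
      (q * (τ (l + 1) m (n + 1) / τ (l + 1) m n) -
        p * (τ l (m + 1) (n + 1) / τ l (m + 1) n)) /
      (q * (τ l (m + 1) (n + 1) / τ l (m + 1) n) -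
        p * (τ (l + 1) m (n + 1) / τ (l + 1) m n)) := by
  have hC : τ l (m+1) n ≠ 0 := hτ _ _ _
  have hB : τ (l+1) m n ≠ 0 := hτ _ _ _
  have e1 : q * (τ l (m+1) (n+1) / τ l (m+1) n) - p * (τ (l+1) m (n+1) / τ (l+1) m n) =
      (q * (τ l (m+1) (n+1) * τ (l+1) m n) - p * (τ l (m+1) n * τ (l+1) m (n+1))) /
      (τ l (m+1) n * τ (l+1) m n) := by
    field_simp
  have e2 : q * (τ (l+1) m (n+1) / τ (l+1) m n) - p * (τ l (m+1) (n+1) / τ l (m+1) n) =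
      (q * (τ l (m+1) n * τ (l+1) m (n+1)) - p * (τ l (m+1) (n+1) * τ (l+1) m n)) /
      (τ l (m+1) n * τ (l+1) m n) := by
    field_simp
  rw [e1] at hden
  have hCB : τ l (m+1) n * τ (l+1) m n ≠ 0 := mul_ne_zero hC hB
  have hd2 : q * (τ l (m+1) (n+1) * τ (l+1) m n) -
      p * (τ l (m+1) n * τ (l+1) m (n+1)) ≠ 0 := by
    intro h
    exact hden (by rw [h, zero_div])
  rw [e1, e2, div_div_div_eq, div_div_div_eq,
    div_eq_div_iff (mul_ne_zero (hτ _ _ _) (hτ _ _ _)) (mul_ne_zero hCB hd2)]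
  linear_combination (τ l (m+1) n * τ (l+1) m n) * ((q * (τ l (m+1) (n+1) * τ (l+1) m n) -
      p * (τ l (m+1) n * τ (l+1) m (n+1))) * hbil1 +
    (q * (τ l (m+1) n * τ (l+1) m (n+1)) -
      p * (τ l (m+1) (n+1) * τ (l+1) m n)) * hbil2)
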